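/- For every n ≥ 0, det((H_{i+j}(2))_{i,j=0}^{2n}) = 0, where H_m(2) = ∑_{k=1}^{m} 2^k/k. -/

import Mathlib

/-- `H_m(2) = ∑_{k=1}^m 2^k/k`. -/
noncomputable def harmonicTwo (m : ℕ) : ℝ := ∑ k ∈ Finset.Icc 1 m, (2 : ℝ) ^ k / (k : ℝ)

open Polynomial Finset intervalIntegral

-- endpoint vanishing
lemma aux_van (a : ℝ) : ∀ (k m : ℕ), k < m → ∀ q : ℝ[X],
    (Polynomial.derivative^[k] ((X - C a)^m * q)).eval a = 0 := by
  intro k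
  induction k with
  | zero =>
    intro m hm q
    simp only [Function.iterate_zero_apply, eval_mul, eval_pow, eval_sub, eval_X, eval_C,
      sub_self]
    rw [zero_pow (by omega : m ≠ 0), zero_mul]
  | succ k ih =>
    intro m hm q
    obtain ⟨s, rfl⟩ : ∃ s, m = s + 1 := ⟨m - 1, by omega⟩
    have hd : Polynomial.derivative ((X - C a)^(s+1) * q)
        = (X - C a)^s * (C ((s:ℝ)+1) * q + (X - C a) * Polynomial.derivative q) := by
      rw [derivative_mul, derivative_pow, derivative_sub, derivative_X, derivative_C]
      push_cast
      ring
    rw [Function.iterate_succ_apply, hd]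
    exact ih s (by omega) _

-- FTC for polynomials
lemma aux_ftc (p : ℝ[X]) :
    ∫ x in (0:ℝ)..2, (Polynomial.derivative p).eval x = p.eval 2 - p.eval 0 := by
  apply intervalIntegral.integral_deriv_eq_sub' (fun x => p.eval x)
  · funext x
    exact (p.hasDerivAt x).deriv
  · intro x _
    exact (p.hasDerivAt x).differentiableAt
  · exact ((Polynomial.derivative p).continuous).continuousOn

lemma aux_orth : ∀ (N : ℕ) (p g : ℝ[X]), p.degree < (N : ℕ) →
    (∀ k, k < N → (Polynomial.derivative^[k] g).eval 0 = 0) →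
    (∀ k, k < N → (Polynomial.derivative^[k] g).eval 2 = 0) →
    ∫ x in (0:ℝ)..2, p.eval x * (Polynomial.derivative^[N] g).eval x = 0 := by
  intro N
  induction N with
  | zero =>
    intro p g hp _ _
    have : p = 0 := by
      by_contra h
      exact absurd (Polynomial.zero_le_degree_iff.mpr h) (not_le.mpr (by simpa using hp))
    simp [this]
  | succ N ih =>
    intro p g hp hg0 hg2
    set h : ℝ[X] := Polynomial.derivative^[N] g with hh
    have step : ∀ x : ℝ, p.eval x * (Polynomial.derivative^[N+1] g).eval x
        = (Polynomial.derivative (p * h)).eval x - (Polynomial.derivative p).eval x * h.eval x := by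
      intro x
      rw [Function.iterate_succ_apply', ← hh, derivative_mul]
      simp only [eval_add, eval_mul]
      ring
    rw [intervalIntegral.integral_congr (g := fun x =>
        (Polynomial.derivative (p * h)).eval x - (Polynomial.derivative p).eval x * h.eval x)
        (fun x _ => step x)]
    rw [intervalIntegral.integral_sub (g := fun x => (Polynomial.derivative p).eval x * h.eval x)
      (((Polynomial.derivative (p*h)).continuous).intervalIntegrable _ _)
      ((((Polynomial.derivative p).continuous).mul (h.continuous)).intervalIntegrable _ _)]
    rw [aux_ftc]
    have hp' : (Polynomial.derivative p).degree < (N : ℕ) := by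
      rcases eq_or_ne p 0 with rfl | hne
      · simp only [Polynomial.derivative_zero, Polynomial.degree_zero]
        exact WithBot.bot_lt_coe (N : ℕ)
      · have h1 : p.degree ≤ (N : ℕ) := by
          rcases Polynomial.degree_eq_natDegree hne ▸ hp with h
          rw [Polynomial.degree_eq_natDegree hne]
          exact_mod_cast Nat.lt_succ_iff.mp (by exact_mod_cast h)
        exact lt_of_lt_of_le (Polynomial.degree_derivative_lt hne) h1
    rw [ih (Polynomial.derivative p) g hp' (fun k hk => hg0 k (by omega))
      (fun k hk => hg2 k (by omega))]
    have e2 : h.eval 2 = 0 := hg2 N (by omega)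
    have e0 : h.eval 0 = 0 := hg0 N (by omega)
    simp [e0, e2]

lemma aux_comp (p : ℝ[X]) (k : ℕ) :
    Polynomial.derivative^[k] (p.comp (C 2 - X))
      = (-1)^k * (Polynomial.derivative^[k] p).comp (C 2 - X) := by
  induction' k with k ih generalizing p
  · simp
  · simp [ih (Polynomial.derivative p), Polynomial.iterate_derivative_neg,
      Polynomial.derivative_comp, pow_succ]

lemma aux_hint (m : ℕ) :
    harmonicTwo m = ∫ x in (0:ℝ)..2, (∑ t ∈ Finset.range m, (X:ℝ[X])^t).eval x := by
  have : ∀ x : ℝ, (∑ t ∈ Finset.range m, (X:ℝ[X])^t).eval x = ∑ t ∈ Finset.range m, x^t := by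
    intro x; simp [Polynomial.eval_finset_sum]
  rw [intervalIntegral.integral_congr (fun x _ => this x)]
  rw [intervalIntegral.integral_finset_sum
    (fun t _ => (intervalIntegral.intervalIntegrable_pow t))]
  simp only [integral_pow]
  rw [harmonicTwo, ← Finset.Ico_add_one_right_eq_Icc, Finset.sum_Ico_eq_sum_range,
    Nat.add_sub_cancel]
  apply Finset.sum_congr rfl
  intro t _
  push_cast
  ring_nf

/-- `det((H_{i+j}(2))_{i,j=0}^{2n}) = 0`. -/
theorem det_hankel_harmonicTwo_even (n : ℕ) :
    Matrix.det (Matrix.of fun i j : Fin (2 * n + 1) => harmonicTwo ((i : ℕ) + (j : ℕ))) = 0 := by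
  classical
  set f : ℝ[X] := X^(2*n) * (X - C 2)^(2*n) with hf
  set U : ℝ[X] := Polynomial.derivative^[2*n] f with hU
  set c : ℝ := U.eval 1 with hc
  set hp : ℕ → ℝ[X] := fun m => ∑ t ∈ Finset.range m, (X:ℝ[X])^t with hhp
  -- degree facts
  have hfmonic : f.Monic := (monic_X_pow _).mul ((monic_X_sub_C (2:ℝ)).pow _)
  have hfdeg : f.natDegree = 2*n + 2*n := by
    rw [hf, (monic_X_pow _).natDegree_mul ((monic_X_sub_C (2:ℝ)).pow _)]
    simp [natDegree_pow]
  have hUdeg : U.natDegree < 2*n + 1 := by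
    have h := Polynomial.natDegree_iterate_derivative f (2*n)
    rw [← hU, hfdeg] at h
    omega
  have hUsum : U = ∑ j ∈ Finset.range (2*n+1), C (U.coeff j) * X^j := by
    conv_lhs => rw [U.as_sum_range' (2*n+1) hUdeg]
    exact Finset.sum_congr rfl fun j _ => (C_mul_X_pow_eq_monomial).symm
  have hceval : c = ∑ j ∈ Finset.range (2*n+1), U.coeff j := by
    rw [hc]
    conv_lhs => rw [hUsum]
    simp [Polynomial.eval_finset_sum]
  -- symmetry
  have hfs : f.comp (C 2 - X) = f := by
    rw [hf]
    simp only [mul_comp, pow_comp, sub_comp, X_comp, C_comp]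
    rw [show (C 2 - X : ℝ[X]) - C 2 = -X by ring,
      (even_two_mul n).neg_pow,
      show (C 2 - X : ℝ[X]) = -(X - C 2) by ring,
      (even_two_mul n).neg_pow, mul_comm]
  have hUs : U.comp (C 2 - X) = U := by
    have h1 := aux_comp f (2*n)
    rw [hfs, (even_two_mul n).neg_one_pow, one_mul] at h1
    rw [hU, ← h1]
  -- the odd companion V
  obtain ⟨V, hV⟩ : (X - C 1) ∣ (U - C c) := Polynomial.X_sub_C_dvd_sub_C_eval
  have hVs : V.comp (C 2 - X) = -V := by
    have h2 : (U - C c).comp (C 2 - X) = U - C c := by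
      simp [sub_comp, hUs]
    rw [hV] at h2
    rw [mul_comp, sub_comp, X_comp, C_comp] at h2
    have h3 : (X - C 1) * ( -(V.comp (C 2 - X))) = (X - C 1) * V := by
      rw [← h2]
      simp only [Polynomial.C_1, map_ofNat]
      ring
    have h4 := mul_left_cancel₀ (Polynomial.X_sub_C_ne_zero (1:ℝ)) h3
    exact neg_eq_iff_eq_neg.mp h4
  have hVint : ∫ x in (0:ℝ)..2, V.eval x = 0 := by
    have h1 : ∫ x in (0:ℝ)..2, V.eval (2 - x) = ∫ x in (0:ℝ)..2, V.eval x := by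
      have := intervalIntegral.integral_comp_sub_left (a := (0:ℝ)) (b := 2)
        (fun x => V.eval x) 2
      simpa using this
    have h2 : ∀ x : ℝ, V.eval (2 - x) = - V.eval x := by
      intro x
      have := congrArg (Polynomial.eval x) hVs
      simpa [Polynomial.eval_comp] using this
    rw [intervalIntegral.integral_congr (fun x _ => h2 x)] at h1
    rw [intervalIntegral.integral_neg] at h1
    linarith
  -- orthogonality
  have h0 : ∀ k, k < 2*n → (Polynomial.derivative^[k] f).eval 0 = 0 := by
    intro k hk
    have : f = (X - C (0:ℝ))^(2*n) * (X - C 2)^(2*n) := by simp [hf]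
    rw [this]
    exact aux_van 0 k (2*n) hk _
  have h2 : ∀ k, k < 2*n → (Polynomial.derivative^[k] f).eval 2 = 0 := by
    intro k hk
    have : f = (X - C (2:ℝ))^(2*n) * X^(2*n) := by rw [hf]; ring
    rw [this]
    exact aux_van 2 k (2*n) hk _
  have hortho : ∀ i : ℕ, i ≤ 2*n →
      ∫ x in (0:ℝ)..2, (hp i).eval x * U.eval x = 0 := by
    intro i hi
    have hdeg : (hp i).degree < ((2*n : ℕ) : WithBot ℕ) := by
      have hlt : (hp i).degree < ((i : ℕ) : WithBot ℕ) := by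
        apply lt_of_le_of_lt (Polynomial.degree_sum_le _ _)
        rw [Finset.sup_lt_iff (by exact WithBot.bot_lt_coe i)]
        intro t ht
        rw [Polynomial.degree_X_pow]
        exact_mod_cast Finset.mem_range.mp ht
      exact lt_of_lt_of_le hlt (by exact_mod_cast hi)
    exact aux_orth (2*n) (hp i) f hdeg h0 h2
  -- geometric sum identity
  have hgeom : ∀ m : ℕ, (X - C 1) * hp m = X^m - 1 := by
    intro m
    rw [mul_comm, hhp]
    simpa using geom_sum_mul (X : ℝ[X]) m
  -- main polynomial identity
  have hmain : ∀ i : ℕ,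
      (∑ j ∈ Finset.range (2*n+1), C (U.coeff j) * hp (i+j)) = V + hp i * U := by
    intro i
    apply mul_left_cancel₀ (Polynomial.X_sub_C_ne_zero (1:ℝ))
    rw [Finset.mul_sum]
    have lhs_eq : ∀ j ∈ Finset.range (2*n+1),
        (X - C 1) * (C (U.coeff j) * hp (i+j)) = C (U.coeff j) * (X^(i+j) - 1) := by
      intro j _
      rw [show (X - C 1) * (C (U.coeff j) * hp (i+j))
          = C (U.coeff j) * ((X - C 1) * hp (i+j)) by ring, hgeom]
    rw [Finset.sum_congr rfl lhs_eq]
    have : ∑ j ∈ Finset.range (2*n+1), C (U.coeff j) * ((X:ℝ[X])^(i+j) - 1)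
        = X^i * (∑ j ∈ Finset.range (2*n+1), C (U.coeff j) * X^j)
          - ∑ j ∈ Finset.range (2*n+1), C (U.coeff j) := by
      rw [Finset.mul_sum, ← Finset.sum_sub_distrib]
      apply Finset.sum_congr rfl
      intro j _
      rw [pow_add]; ring
    rw [this, ← hUsum]
    have hCc : (∑ j ∈ Finset.range (2*n+1), C (U.coeff j)) = C c := by
      rw [hceval, map_sum]
    rw [hCc]
    rw [mul_add, ← hV, show (X - C 1) * (hp i * U) = ((X - C 1) * hp i) * U by ring, hgeom]
    ring
  -- the kernel identity
  have key : ∀ i : ℕ, i ≤ 2*n →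
      ∑ j ∈ Finset.range (2*n+1), U.coeff j * harmonicTwo (i+j) = 0 := by
    intro i hi
    have step1 : ∀ j, U.coeff j * harmonicTwo (i+j)
        = ∫ x in (0:ℝ)..2, U.coeff j * (hp (i+j)).eval x := by
      intro j
      rw [aux_hint, ← intervalIntegral.integral_const_mul]
    calc ∑ j ∈ Finset.range (2*n+1), U.coeff j * harmonicTwo (i+j)
        = ∑ j ∈ Finset.range (2*n+1), ∫ x in (0:ℝ)..2, U.coeff j * (hp (i+j)).eval x := by
          exact Finset.sum_congr rfl fun j _ => step1 j
      _ = ∫ x in (0:ℝ)..2, ∑ j ∈ Finset.range (2*n+1), U.coeff j * (hp (i+j)).eval x := by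
          rw [intervalIntegral.integral_finset_sum]
          intro j _
          exact (continuous_const.mul ((hp (i+j)).continuous)).intervalIntegrable _ _
      _ = ∫ x in (0:ℝ)..2, (V + hp i * U).eval x := by
          apply intervalIntegral.integral_congr
          intro x _
          rw [← hmain i]
          simp [Polynomial.eval_finset_sum]
      _ = (∫ x in (0:ℝ)..2, V.eval x) + ∫ x in (0:ℝ)..2, (hp i).eval x * U.eval x := by
          simp only [Polynomial.eval_add, Polynomial.eval_mul]
          rw [intervalIntegral.integral_add (g := fun x => (hp i).eval x * U.eval x) (V.continuous.intervalIntegrable _ _)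
            (((hp i).continuous.mul U.continuous).intervalIntegrable _ _)]
      _ = 0 := by rw [hVint, hortho i hi, add_zero]
  -- nonvanishing top coefficient
  have hv : U.coeff (2*n) ≠ 0 := by
    rw [hU, Polynomial.coeff_iterate_derivative]
    have : f.coeff (2*n + 2*n) = 1 := by
      have := hfmonic.coeff_natDegree
      rwa [hfdeg] at this
    rw [this]
    rw [nsmul_eq_mul, mul_one]
    have hpos : 0 < (2*n + 2*n).descFactorial (2*n) := by
      rcases Nat.eq_zero_or_pos ((2*n + 2*n).descFactorial (2*n)) with h | h
      · exact absurd (Nat.descFactorial_eq_zero_iff_lt.mp h) (by omega)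
      · exact h
    positivity
  -- conclude
  rw [← Matrix.exists_mulVec_eq_zero_iff]
  refine ⟨fun j => U.coeff j, ?_, ?_⟩
  · intro hzero
    have := congrFun hzero ⟨2*n, by omega⟩
    exact hv this
  · funext i
    have : ∀ j : Fin (2*n+1),
        Matrix.of (fun i j : Fin (2 * n + 1) => harmonicTwo ((i : ℕ) + (j : ℕ))) i j
          * U.coeff j = U.coeff j * harmonicTwo ((i:ℕ) + (j:ℕ)) := by
      intro j; rw [mul_comm]; rfl
    rw [Matrix.mulVec, Pi.zero_apply]
    show ∑ j, _ = (0:ℝ)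
    calc (∑ j : Fin (2*n+1), Matrix.of
            (fun i j : Fin (2 * n + 1) => harmonicTwo ((i : ℕ) + (j : ℕ))) i j * U.coeff j)
        = ∑ j : Fin (2*n+1), U.coeff j * harmonicTwo ((i:ℕ) + (j:ℕ)) :=
          Finset.sum_congr rfl fun j _ => this j
      _ = ∑ j ∈ Finset.range (2*n+1), U.coeff j * harmonicTwo ((i:ℕ) + j) := by
          rw [Finset.sum_range fun j => U.coeff j * harmonicTwo ((i:ℕ) + j)]
      _ = 0 := key i (by omega)
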